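/- Let Γ_e = −J⁻¹ρ/‖J⁻¹ρ‖ and ω_e = ±√(mg/‖J⁻¹ρ‖) J⁻¹ρ. Then (Γ_e, ω_e) is an equilibrium of the reduced 3D pendulum equations: Jω_e × ω_e + mg ρ × Γ_e = 0 and Γ_e × ω_e = 0. -/

import Mathlib

open Matrix

noncomputable def enorm3 (v : Fin 3 → ℝ) : ℝ := Real.sqrt (v ⬝ᵥ v)

/-- The pair `Γ_e = −J⁻¹ρ/‖J⁻¹ρ‖`, `ω_e = ±√(mg/‖J⁻¹ρ‖) J⁻¹ρ` is a (relative)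
equilibrium of the reduced 3D pendulum equations. -/
theorem relative_equilibrium_Jinv
    (J : Matrix (Fin 3) (Fin 3) ℝ) (hJsymm : J.IsSymm) (hJpos : J.PosDef)
    (m g : ℝ) (hm : 0 < m) (hg : 0 < g) (ρ : Fin 3 → ℝ) (hρ : ρ ≠ 0)
    (Γe ωe : Fin 3 → ℝ)
    (hΓe : Γe = -((enorm3 (J⁻¹.mulVec ρ))⁻¹ • J⁻¹.mulVec ρ))
    (hωe : ωe = Real.sqrt (m * g / enorm3 (J⁻¹.mulVec ρ)) • J⁻¹.mulVec ρ
        ∨ ωe = -(Real.sqrt (m * g / enorm3 (J⁻¹.mulVec ρ)) • J⁻¹.mulVec ρ)) :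
    crossProduct (J.mulVec ωe) ωe + (m * g) • crossProduct ρ Γe = 0
      ∧ crossProduct Γe ωe = 0 := by
  set v : Fin 3 → ℝ := J⁻¹.mulVec ρ with hv
  have hdet : IsUnit J.det := isUnit_iff_ne_zero.2 hJpos.det_pos.ne'
  have hvne : v ≠ 0 := by
    intro h
    apply hρ
    have : J.mulVec v = J.mulVec 0 := by rw [h]
    rwa [hv, Matrix.mulVec_mulVec, Matrix.mul_nonsing_inv J hdet, Matrix.one_mulVec,
      Matrix.mulVec_zero] at this
  have hvv : 0 < v ⬝ᵥ v := by
    have hne : v ⬝ᵥ v ≠ 0 := fun h => hvne (dotProduct_self_eq_zero.mp h)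
    have hnn : 0 ≤ v ⬝ᵥ v := by
      simp only [dotProduct]
      exact Finset.sum_nonneg fun i _ => mul_self_nonneg _
    exact hnn.lt_of_ne (Ne.symm hne)
  set n : ℝ := enorm3 v with hn
  have hnpos : 0 < n := Real.sqrt_pos.2 hvv
  set c : ℝ := Real.sqrt (m * g / n) with hc
  have hc2 : c * c = m * g / n := Real.mul_self_sqrt (by positivity)
  have hJv : J.mulVec v = ρ := by
    rw [hv, Matrix.mulVec_mulVec, Matrix.mul_nonsing_inv J hdet, Matrix.one_mulVec]
  have key1 : crossProduct (J.mulVec (c • v)) (c • v)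
      + (m * g) • crossProduct ρ (-(n⁻¹ • v)) = 0 := by
    rw [Matrix.mulVec_smul, hJv]
    have h1 : crossProduct (c • ρ) (c • v) = (c * c) • crossProduct ρ v := by
      simp only [_root_.map_smul, LinearMap.smul_apply, smul_smul]
    have h2 : crossProduct ρ (-(n⁻¹ • v)) = (-(n⁻¹)) • crossProduct ρ v := by
      simp only [_root_.map_neg, _root_.map_smul, neg_smul]
    rw [h1, h2, smul_smul, hc2, ← add_smul]
    have : m * g / n + m * g * -n⁻¹ = 0 := by field_simp; ring
    rw [this, zero_smul]
  have key2 : ∀ (a b : ℝ), crossProduct (a • v) (b • v) = 0 := by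
    intro a b
    simp only [_root_.map_smul, LinearMap.smul_apply, cross_self, smul_zero]
  rcases hωe with h | h <;> subst h <;> subst hΓe <;> constructor
  · exact key1
  · rw [show -((enorm3 v)⁻¹ • v) = (-(enorm3 v)⁻¹) • v by rw [neg_smul]]
    exact key2 _ _
  · have : crossProduct (J.mulVec (-(c • v))) (-(c • v))
        = crossProduct (J.mulVec (c • v)) (c • v) := by
      simp only [Matrix.mulVec_neg, _root_.map_neg, LinearMap.neg_apply, neg_neg]
    rw [this]; exact key1
  · rw [show -((enorm3 v)⁻¹ • v) = (-(enorm3 v)⁻¹) • v by rw [neg_smul],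
      show -(c • v) = (-c) • v by rw [neg_smul]]
    exact key2 _ _
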